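/- Let k, m, ℓ be natural numbers with ℓ ≥ 1, and let H ⊆ [k]^m be a nonempty finite class that is downward closed, meaning that whenever h ∈ H and g ∈ [k]^m satisfy g(i) ≤ h(i) for all i ∈ [m], then g ∈ H. Then savd^ℓ(H) ≤ d_E^ℓ(H). -/

import Mathlib

/-- The edge of the one-inclusion graph of `H` in direction `i` through the vertex `g`:
all `h ∈ H` agreeing with `g` outside coordinate `i`. -/
def edgeOf {m k : ℕ} (H : Finset (Fin m → Fin k)) (i : Fin m) (g : Fin m → Fin k) :
    Finset (Fin m → Fin k) :=
  H.filter fun h => ∀ j, j ≠ i → h j = g j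


-- basic lemmas
lemma mem_edgeOf {m k : ℕ} {H : Finset (Fin m → Fin k)} {i : Fin m} {g h : Fin m → Fin k} :
    h ∈ edgeOf H i g ↔ h ∈ H ∧ ∀ j, j ≠ i → h j = g j := Finset.mem_filter

lemma self_mem_edgeOf {m k : ℕ} {H : Finset (Fin m → Fin k)} {i : Fin m} {g : Fin m → Fin k}
    (hg : g ∈ H) : g ∈ edgeOf H i g := mem_edgeOf.mpr ⟨hg, fun _ _ => rfl⟩

lemma edgeOf_eq_of_mem {m k : ℕ} {H : Finset (Fin m → Fin k)} {i : Fin m} {g h : Fin m → Fin k}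
    (hh : h ∈ edgeOf H i g) : edgeOf H i h = edgeOf H i g := by
  obtain ⟨_, hagree⟩ := mem_edgeOf.mp hh
  ext f
  simp only [mem_edgeOf]
  constructor
  · rintro ⟨hf, ha⟩; exact ⟨hf, fun j hj => (ha j hj).trans (hagree j hj)⟩
  · rintro ⟨hf, ha⟩; exact ⟨hf, fun j hj => (ha j hj).trans (hagree j hj).symm⟩

lemma downset_eq_range (S : Finset ℕ) (h : ∀ a ∈ S, ∀ b, b ≤ a → b ∈ S) :
    S = Finset.range S.card := by
  have hsub : S ⊆ Finset.range S.card := by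
    intro a ha
    rw [Finset.mem_range]
    have h1 : Finset.range (a + 1) ⊆ S := fun b hb =>
      h a ha b (Nat.lt_succ_iff.mp (Finset.mem_range.mp hb))
    have := Finset.card_le_card h1
    simpa using this
  exact Finset.eq_of_subset_of_card_le hsub (by simp)

section EdgeCount
variable {m k : ℕ} {H : Finset (Fin m → Fin k)}

lemma edge_injOn (i : Fin m) (g : Fin m → Fin k) :
    Set.InjOn (fun h => h i) (edgeOf H i g : Set (Fin m → Fin k)) := by
  intro a ha b hb hab
  obtain ⟨_, ha2⟩ := mem_edgeOf.mp ha
  obtain ⟨_, hb2⟩ := mem_edgeOf.mp hb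
  funext j
  by_cases hj : j = i
  · subst hj; exact hab
  · rw [ha2 j hj, hb2 j hj]

lemma update_mem_edgeOf_iff {i : Fin m} {g : Fin m → Fin k} (c : Fin k) :
    Function.update g i c ∈ edgeOf H i g ↔ Function.update g i c ∈ H := by
  simp only [mem_edgeOf, and_iff_left_iff_imp]
  intro _ j hj
  exact Function.update_of_ne hj c g

lemma eq_update_of_mem_edgeOf {i : Fin m} {g h : Fin m → Fin k} (hh : h ∈ edgeOf H i g) :
    h = Function.update g i (h i) := by
  obtain ⟨_, h2⟩ := mem_edgeOf.mp hh
  funext j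
  by_cases hj : j = i
  · subst hj; simp
  · rw [Function.update_of_ne hj, h2 j hj]

lemma edge_image (i : Fin m) (g : Fin m → Fin k) :
    (edgeOf H i g).image (fun h => h i)
      = Finset.univ.filter (fun c : Fin k => Function.update g i c ∈ H) := by
  ext c
  simp only [Finset.mem_image, Finset.mem_filter, Finset.mem_univ, true_and]
  constructor
  · rintro ⟨h, hh, rfl⟩
    rw [← eq_update_of_mem_edgeOf hh]
    exact (mem_edgeOf.mp hh).1
  · intro hc
    refine ⟨Function.update g i c, (update_mem_edgeOf_iff c).mpr hc, ?_⟩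
    simp

lemma downset_card_sub {k ℓ : ℕ} (C : Finset (Fin k))
    (hdown : ∀ c ∈ C, ∀ b : Fin k, b.val ≤ c.val → b ∈ C) :
    C.card - ℓ = (C.filter (fun c => ℓ ≤ c.val)).card := by
  classical
  have hcn_card : (C.image Fin.val).card = C.card :=
    Finset.card_image_of_injective _ Fin.val_injective
  have hcn_down : ∀ a ∈ C.image Fin.val, ∀ b, b ≤ a → b ∈ C.image Fin.val := by
    intro a ha b hb
    rw [Finset.mem_image] at ha ⊢
    obtain ⟨c, hc, rfl⟩ := ha
    have hbk : b < k := lt_of_le_of_lt hb c.isLt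
    exact ⟨⟨b, hbk⟩, hdown c hc ⟨b, hbk⟩ hb, rfl⟩
  have hrange : C.image Fin.val = Finset.range C.card := by
    rw [← hcn_card]; exact downset_eq_range _ hcn_down
  have hfiltn : ((C.image Fin.val).filter (fun b => ℓ ≤ b)).card
      = (C.filter (fun c => ℓ ≤ c.val)).card := by
    rw [Finset.filter_image]
    exact Finset.card_image_of_injective _ Fin.val_injective
  rw [← hfiltn, hrange]
  have h2 : (Finset.range C.card).filter (fun b => ℓ ≤ b) = Finset.Ico ℓ C.card := by
    ext b
    simp only [Finset.mem_filter, Finset.mem_range, Finset.mem_Ico]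
    omega
  rw [h2, Nat.card_Ico]

lemma edge_card_sub (ℓ : ℕ)
    (hdc : ∀ h ∈ H, ∀ g : Fin m → Fin k, (∀ i, (g i : ℕ) ≤ (h i : ℕ)) → g ∈ H)
    (i : Fin m) (g : Fin m → Fin k) :
    (edgeOf H i g).card - ℓ = ((edgeOf H i g).filter (fun h => ℓ ≤ (h i : ℕ))).card := by
  classical
  have hcard : (edgeOf H i g).card
      = ((edgeOf H i g).image (fun h => h i)).card :=
    (Finset.card_image_of_injOn (edge_injOn i g)).symm
  have hcard2 : ((edgeOf H i g).filter (fun h => ℓ ≤ (h i : ℕ))).card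
      = (((edgeOf H i g).image (fun h => h i)).filter (fun c => ℓ ≤ c.val)).card := by
    rw [Finset.filter_image]
    exact (Finset.card_image_of_injOn ((edge_injOn i g).mono (by
      intro x hx; exact Finset.mem_of_mem_filter x hx))).symm
  rw [hcard, hcard2]
  apply downset_card_sub
  intro c hc b hb
  rw [edge_image] at hc ⊢
  rw [Finset.mem_filter] at hc ⊢
  refine ⟨Finset.mem_univ _, hdc _ hc.2 _ ?_⟩
  intro j
  by_cases hj : j = i
  · subst hj; simpa using hb
  · simp [Function.update_of_ne hj]

end EdgeCount


/-- The edges of the one-inclusion graph of `H`, each recorded together with its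
direction: for every direction `i` and every vertex `g ∈ H` we get the (nonempty) edge
`e_{i,f}` where `f` is the restriction of `g` to `[m] \ {i}`. -/
def oigEdges {m k : ℕ} (H : Finset (Fin m → Fin k)) :
    Finset (Fin m × Finset (Fin m → Fin k)) :=
  (Finset.univ ×ˢ H).image fun p => (p.1, edgeOf H p.1 p.2)

section Count
variable {m k : ℕ} {H : Finset (Fin m → Fin k)}

lemma mem_oigEdges {p : Fin m × Finset (Fin m → Fin k)} :
    p ∈ oigEdges H ↔ ∃ i : Fin m, ∃ g ∈ H, p = (i, edgeOf H i g) := by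
  simp only [oigEdges, Finset.mem_image, Finset.mem_product, Finset.mem_univ, true_and,
    Prod.exists]
  constructor
  · rintro ⟨i, g, hg, rfl⟩; exact ⟨i, g, hg, rfl⟩
  · rintro ⟨i, g, hg, rfl⟩; exact ⟨i, g, hg, rfl⟩

lemma sum_edges_count (ℓ : ℕ)
    (hdc : ∀ h ∈ H, ∀ g : Fin m → Fin k, (∀ i, (g i : ℕ) ≤ (h i : ℕ)) → g ∈ H) :
    ∑ p ∈ oigEdges H, (p.2.card - ℓ)
      = ∑ h ∈ H, (Finset.univ.filter (fun i : Fin m => ℓ ≤ (h i : ℕ))).card := by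
  classical
  have step1 : ∀ p ∈ oigEdges H,
      p.2.card - ℓ = ∑ h ∈ p.2, (if ℓ ≤ (h p.1 : ℕ) then 1 else 0) := by
    intro p hp
    obtain ⟨i, g, hg, rfl⟩ := mem_oigEdges.mp hp
    rw [edge_card_sub ℓ hdc i g, Finset.card_filter]
  rw [Finset.sum_congr rfl step1]
  have step2 : ∀ h ∈ H,
      (Finset.univ.filter (fun i : Fin m => ℓ ≤ (h i : ℕ))).card
        = ∑ i : Fin m, (if ℓ ≤ (h i : ℕ) then 1 else 0) := by
    intro h _
    rw [Finset.card_filter]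
  rw [Finset.sum_congr rfl step2]
  rw [← Finset.sum_sigma (oigEdges H) (fun p => p.2)
      (fun x => if ℓ ≤ (x.2 (x.1.1) : ℕ) then 1 else 0),
    ← Finset.sum_product H Finset.univ (fun y => if ℓ ≤ (y.1 y.2 : ℕ) then 1 else 0)]
  refine Finset.sum_nbij' (fun x => (x.2, x.1.1)) (fun y => ⟨(y.2, edgeOf H y.2 y.1), y.1⟩)
    ?_ ?_ ?_ ?_ ?_
  · rintro ⟨p, h⟩ hx
    rw [Finset.mem_sigma] at hx
    obtain ⟨hp, hh⟩ := hx
    obtain ⟨i, g, hg, rfl⟩ := mem_oigEdges.mp hp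
    exact Finset.mem_product.mpr ⟨(mem_edgeOf.mp hh).1, Finset.mem_univ _⟩
  · rintro ⟨h, i⟩ hy
    obtain ⟨hh, -⟩ := Finset.mem_product.mp hy
    refine Finset.mem_sigma.mpr ⟨?_, self_mem_edgeOf hh⟩
    exact mem_oigEdges.mpr ⟨i, h, hh, rfl⟩
  · rintro ⟨p, h⟩ hx
    rw [Finset.mem_sigma] at hx
    obtain ⟨hp, hh⟩ := hx
    obtain ⟨i, g, hg, rfl⟩ := mem_oigEdges.mp hp
    simp only
    congr 1
    exact Prod.ext rfl (edgeOf_eq_of_mem hh)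
  · rintro ⟨h, i⟩ _
    rfl
  · rintro ⟨p, h⟩ _
    rfl

end Count

/-- The `ℓ`-exponential dimension of `H ⊆ [k]^m`: the largest `d` such that for some
coordinates `i_1, …, i_d ∈ [m]` the projection of `H` has at least `(ℓ+1)^d` elements. -/
noncomputable def expDim {m k : ℕ} (ℓ : ℕ) (H : Finset (Fin m → Fin k)) : ℕ :=
  sSup {d : ℕ | ∃ t : Fin d → Fin m,
    (ℓ + 1) ^ d ≤ (H.image fun h => fun j => h (t j)).card}

section Bound
variable {m k ℓ : ℕ} {H : Finset (Fin m → Fin k)}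

lemma expDim_bddAbove (hℓ : 1 ≤ ℓ) :
    BddAbove {d : ℕ | ∃ t : Fin d → Fin m,
      (ℓ + 1) ^ d ≤ (H.image fun h => fun j => h (t j)).card} := by
  refine ⟨H.card, ?_⟩
  rintro d ⟨t, ht⟩
  have h1 : (ℓ + 1) ^ d ≤ H.card := ht.trans Finset.card_image_le
  have h2 : d < 2 ^ d := Nat.lt_two_pow_self (n := d)
  clear ht t
  have h0 : 2 ≤ ℓ + 1 := by omega
  have h3 : 2 ^ d ≤ (ℓ + 1) ^ d := Nat.pow_le_pow_left h0 d
  omega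

def cubeMap {m k : ℕ} (h : Fin m → Fin k) (S : Finset (Fin m)) {ℓ d : ℕ}
    (e : {x // x ∈ S} ≃ Fin d) (v : Fin d → Fin (ℓ + 1)) : Fin m → Fin k :=
  fun i => ⟨min (if hi : i ∈ S then (v (e ⟨i, hi⟩) : ℕ) else (h i : ℕ)) (h i : ℕ),
    Nat.lt_of_le_of_lt (Nat.min_le_right _ _) (h i).isLt⟩

lemma cubeMap_le {m k : ℕ} (h : Fin m → Fin k) (S : Finset (Fin m)) {ℓ d : ℕ}
    (e : {x // x ∈ S} ≃ Fin d) (v : Fin d → Fin (ℓ + 1)) (i : Fin m) :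
    (cubeMap h S e v i : ℕ) ≤ (h i : ℕ) := Nat.min_le_right _ _

lemma cubeMap_val {m k : ℕ} (h : Fin m → Fin k) (S : Finset (Fin m)) {ℓ d : ℕ}
    (e : {x // x ∈ S} ≃ Fin d) (v : Fin d → Fin (ℓ + 1)) (i : Fin m) (hi : i ∈ S)
    (hSi : ℓ ≤ (h i : ℕ)) :
    (cubeMap h S e v i : ℕ) = (v (e ⟨i, hi⟩) : ℕ) := by
  unfold cubeMap
  simp only [dif_pos hi]
  have := (v (e ⟨i, hi⟩)).isLt
  omega

lemma count_le_expDim (hℓ : 1 ≤ ℓ)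
    (hdc : ∀ h ∈ H, ∀ g : Fin m → Fin k, (∀ i, (g i : ℕ) ≤ (h i : ℕ)) → g ∈ H)
    {h : Fin m → Fin k} (hh : h ∈ H) :
    (Finset.univ.filter (fun i : Fin m => ℓ ≤ (h i : ℕ))).card ≤ expDim ℓ H := by
  classical
  set S : Finset (Fin m) := Finset.univ.filter (fun i : Fin m => ℓ ≤ (h i : ℕ)) with hS
  set d : ℕ := S.card with hd
  have hmemS : ∀ i ∈ S, ℓ ≤ (h i : ℕ) := by
    intro i hi; rw [hS, Finset.mem_filter] at hi; exact hi.2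
  set e : {x // x ∈ S} ≃ Fin d := S.equivFin with he
  set t : Fin d → Fin m := fun j => (e.symm j : Fin m) with hT
  have hG_mem : ∀ v : Fin d → Fin (ℓ + 1), cubeMap h S e v ∈ H :=
    fun v => hdc h hh _ (cubeMap_le h S e v)
  have htS : ∀ j : Fin d, t j ∈ S := fun j => (e.symm j).2
  have hG_proj : ∀ (v : Fin d → Fin (ℓ + 1)) j, ((cubeMap h S e v (t j) : ℕ)) = (v j : ℕ) := by
    intro v j
    rw [cubeMap_val h S e v (t j) (htS j) (hmemS _ (htS j))]
    congr 1
    have h4 : (⟨t j, htS j⟩ : {x // x ∈ S}) = e.symm j := Subtype.ext rfl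
    rw [h4, Equiv.apply_symm_apply]
  have hinj : Set.InjOn (fun v : Fin d → Fin (ℓ + 1) => fun j => cubeMap h S e v (t j))
      (Finset.univ : Finset (Fin d → Fin (ℓ + 1))) := by
    intro v _ w _ hvw
    funext j
    have h3 : cubeMap h S e v (t j) = cubeMap h S e w (t j) := congrFun hvw j
    apply Fin.ext
    rw [← hG_proj v j, ← hG_proj w j, h3]
  have hmaps : ∀ v ∈ (Finset.univ : Finset (Fin d → Fin (ℓ + 1))),
      (fun j => cubeMap h S e v (t j)) ∈ H.image fun h => fun j => h (t j) :=
    fun v _ => Finset.mem_image.mpr ⟨cubeMap h S e v, hG_mem v, rfl⟩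
  have hcards : (ℓ + 1) ^ d ≤ (H.image fun h => fun j => h (t j)).card := by
    have := Finset.card_le_card_of_injOn _ hmaps hinj
    simpa [Finset.card_univ] using this
  have hmem : d ∈ {d : ℕ | ∃ t : Fin d → Fin m,
      (ℓ + 1) ^ d ≤ (H.image fun h => fun j => h (t j)).card} := ⟨t, hcards⟩
  exact le_csSup (expDim_bddAbove hℓ) hmem

end Bound

/-- The shifting average `ℓ`-degree of `H`:
`savd^ℓ(H) = (1/|H|) ∑_{e edge of G(H)} max(|e| - ℓ, 0)`. -/
noncomputable def savd {m k : ℕ} (ℓ : ℕ) (H : Finset (Fin m → Fin k)) : ℝ :=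
  (H.card : ℝ)⁻¹ * ∑ e ∈ oigEdges H, ((e.2.card - ℓ : ℕ) : ℝ)

/-- For a nonempty, downward-closed finite class `H ⊆ [k]^m`, the shifting average
`ℓ`-degree is at most the `ℓ`-exponential dimension. -/
theorem savd_le_expDim_of_downward_closed (k m ℓ : ℕ) (hℓ : 1 ≤ ℓ)
    (H : Finset (Fin m → Fin k)) (hne : H.Nonempty)
    (hdc : ∀ h ∈ H, ∀ g : Fin m → Fin k, (∀ i, (g i : ℕ) ≤ (h i : ℕ)) → g ∈ H) :
    savd ℓ H ≤ (expDim ℓ H : ℝ) := by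
  classical
  have hcard0 : 0 < H.card := Finset.card_pos.mpr hne
  have hcardR : (0 : ℝ) < (H.card : ℝ) := by exact_mod_cast hcard0
  have h1 : ∑ e ∈ oigEdges H, ((e.2.card - ℓ : ℕ) : ℝ)
      = ((∑ h ∈ H, (Finset.univ.filter (fun i : Fin m => ℓ ≤ (h i : ℕ))).card : ℕ) : ℝ) := by
    rw [← sum_edges_count ℓ hdc, Nat.cast_sum]
  have h2 : (∑ h ∈ H, (Finset.univ.filter (fun i : Fin m => ℓ ≤ (h i : ℕ))).card)
      ≤ H.card * expDim ℓ H := by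
    have := Finset.sum_le_card_nsmul H
      (fun h => (Finset.univ.filter (fun i : Fin m => ℓ ≤ (h i : ℕ))).card)
      (expDim ℓ H) (fun h hh => count_le_expDim hℓ hdc hh)
    simpa [smul_eq_mul] using this
  have h3 : ((∑ h ∈ H, (Finset.univ.filter (fun i : Fin m => ℓ ≤ (h i : ℕ))).card : ℕ) : ℝ)
      ≤ (H.card : ℝ) * (expDim ℓ H : ℝ) := by exact_mod_cast h2
  unfold savd
  rw [h1]
  calc (H.card : ℝ)⁻¹
        * ((∑ h ∈ H, (Finset.univ.filter (fun i : Fin m => ℓ ≤ (h i : ℕ))).card : ℕ) : ℝ)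
      ≤ (H.card : ℝ)⁻¹ * ((H.card : ℝ) * (expDim ℓ H : ℝ)) :=
        mul_le_mul_of_nonneg_left h3 (inv_nonneg.mpr hcardR.le)
    _ = (expDim ℓ H : ℝ) := by field_simp
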